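/- Let E be a real inner product space and f : E → ℝ be differentiable with L_f-Lipschitz gradient ‖∇f(x) − ∇f(y)‖ ≤ L_f ‖x − y‖, and suppose f(x) ≥ m for all x ∈ E. Let η > 0 with η ≤ 1/L_f, let E₀ ≥ 0, and let θ^(1), …, θ^(T+1) ∈ E satisfy θ^(t+1) = θ^(t) − η g^(t) where ‖g^(t) − ∇f(θ^(t))‖ ≤ η E₀ for every t ∈ {1,…,T}. Then (1/T) Σ_{t=1}^{T} ‖∇f(θ^(t))‖² ≤ (2/(η T)) (f(θ^(1)) − m) + η² E₀². -/

import Mathlib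

open InnerProductSpace

/-- Descent lemma: a function with `L`-Lipschitz gradient satisfies
`f w ≤ f z + ⟪∇f z, w - z⟫ + L/2 ‖w - z‖²`. -/
lemma descent_lemma {E : Type*} [NormedAddCommGroup E] [InnerProductSpace ℝ E] [CompleteSpace E]
    (f : E → ℝ) (Lf : ℝ) (hLf : 0 ≤ Lf)
    (hdiff : Differentiable ℝ f)
    (hlip : ∀ x y : E, ‖gradient f x - gradient f y‖ ≤ Lf * ‖x - y‖)
    (z w : E) :
    f w ≤ f z + (inner ℝ (gradient f z) (w - z) : ℝ) + Lf / 2 * ‖w - z‖ ^ 2 := by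
  set v := w - z with hv
  have hφ : ∀ t : ℝ, HasDerivAt (fun t : ℝ => f (z + t • v))
      ((inner ℝ (gradient f (z + t • v)) v : ℝ)) t := by
    intro t
    have h1 : HasDerivAt (fun t : ℝ => z + t • v) v t := by
      simpa using ((hasDerivAt_id t).smul_const v).const_add z
    have h2 := (hdiff (z + t • v)).hasGradientAt.hasFDerivAt
    have h3 := h2.comp_hasDerivAt t h1
    exact h3.congr_deriv (by simp [gradient])
  set ψ : ℝ → ℝ := fun t => f (z + t • v) - (inner ℝ (gradient f z) v : ℝ) * t
      - (Lf * ‖v‖ ^ 2 / 2) * t ^ 2 with hψdef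
  have hψ : ∀ t : ℝ, HasDerivAt ψ
      ((inner ℝ (gradient f (z + t • v)) v : ℝ) - (inner ℝ (gradient f z) v : ℝ)
        - Lf * ‖v‖ ^ 2 * t) t := by
    intro t
    have := ((hφ t).sub (((hasDerivAt_id t).const_mul
        ((inner ℝ (gradient f z) v : ℝ))))).sub
      ((hasDerivAt_pow 2 t).const_mul (Lf * ‖v‖ ^ 2 / 2))
    refine this.congr_deriv ?_
    simp only [pow_one, Nat.cast_ofNat, mul_one, Nat.add_one_sub_one]
    ring
  have hanti : AntitoneOn ψ (Set.Icc (0:ℝ) 1) := by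
    apply antitoneOn_of_deriv_nonpos (convex_Icc 0 1)
    · exact fun t _ => ((hψ t).differentiableAt.continuousAt).continuousWithinAt
    · exact fun t _ => (hψ t).differentiableAt.differentiableWithinAt
    · intro t ht
      rw [interior_Icc] at ht
      rw [(hψ t).deriv]
      have h1 : (inner ℝ (gradient f (z + t • v)) v : ℝ) - (inner ℝ (gradient f z) v : ℝ)
          = (inner ℝ (gradient f (z + t • v) - gradient f z) v : ℝ) := by
        rw [inner_sub_left]
      rw [h1]
      have h2 : (inner ℝ (gradient f (z + t • v) - gradient f z) v : ℝ)
          ≤ ‖gradient f (z + t • v) - gradient f z‖ * ‖v‖ := real_inner_le_norm _ _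
      have h3 : ‖gradient f (z + t • v) - gradient f z‖ ≤ Lf * ‖(z + t • v) - z‖ :=
        hlip _ _
      have h4 : ‖(z + t • v) - z‖ = t * ‖v‖ := by
        simp [norm_smul, abs_of_pos ht.1]
      have h5 : (inner ℝ (gradient f (z + t • v) - gradient f z) v : ℝ)
          ≤ Lf * (t * ‖v‖) * ‖v‖ := by
        refine h2.trans (mul_le_mul_of_nonneg_right ?_ (norm_nonneg v))
        rw [← h4]; exact h3
      have h6 : Lf * (t * ‖v‖) * ‖v‖ = Lf * ‖v‖ ^ 2 * t := by ring
      linarith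
  have := hanti (Set.left_mem_Icc.2 zero_le_one) (Set.right_mem_Icc.2 zero_le_one)
      zero_le_one
  have hψ0 : ψ 0 = f z := by simp [hψdef]
  have hψ1 : ψ 1 = f w - (inner ℝ (gradient f z) v : ℝ) - Lf * ‖v‖ ^ 2 / 2 := by
    simp [hψdef, hv]
  rw [hψ0, hψ1] at this
  linarith

/-- Average squared gradient norm bound for gradient descent with approximate (stale)
gradients whose error is bounded by `η * E₀`. -/
theorem stmt_1 {E : Type*} [NormedAddCommGroup E] [InnerProductSpace ℝ E] [CompleteSpace E]
    (f : E → ℝ) (Lf m : ℝ)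
    (hdiff : Differentiable ℝ f)
    (hlip : ∀ x y : E, ‖gradient f x - gradient f y‖ ≤ Lf * ‖x - y‖)
    (hbdd : ∀ x : E, m ≤ f x)
    (η : ℝ) (hη : 0 < η) (hηL : η ≤ 1 / Lf)
    (E₀ : ℝ) (hE₀ : 0 ≤ E₀)
    (T : ℕ) (hT : 0 < T)
    (θ g : ℕ → E)
    (hupd : ∀ t ∈ Finset.Icc 1 T, θ (t + 1) = θ t - η • g t)
    (herr : ∀ t ∈ Finset.Icc 1 T, ‖g t - gradient f (θ t)‖ ≤ η * E₀) :
    (1 / (T : ℝ)) * ∑ t ∈ Finset.Icc 1 T, ‖gradient f (θ t)‖ ^ 2 ≤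
      2 / (η * T) * (f (θ 1) - m) + η ^ 2 * E₀ ^ 2 := by
  -- Lf is positive
  have hLf : 0 < Lf := by
    by_contra h
    push_neg at h
    rcases lt_or_eq_of_le h with h' | h'
    · have : 1 / Lf < 0 := one_div_neg.2 h'
      linarith
    · rw [h'] at hηL; norm_num at hηL; linarith
  have hηLf : η * Lf ≤ 1 := by
    rw [le_div_iff₀ hLf] at hηL; linarith
  -- per-step bound
  have key : ∀ t ∈ Finset.Icc 1 T,
      η / 2 * ‖gradient f (θ t)‖ ^ 2 ≤ f (θ t) - f (θ (t+1)) + η ^ 3 * E₀ ^ 2 / 2 := by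
    intro t ht
    have hdes := descent_lemma f Lf hLf.le hdiff hlip (θ t) (θ (t+1))
    set a := gradient f (θ t) with ha
    set gt := g t with hgt
    have hstep : θ (t+1) - θ t = -(η • gt) := by rw [hupd t ht]; abel
    rw [hstep] at hdes
    have h1 : (inner ℝ a (-(η • gt)) : ℝ) = -(η * (inner ℝ a gt : ℝ)) := by
      rw [inner_neg_right, real_inner_smul_right]
    have h2 : ‖-(η • gt)‖ ^ 2 = η ^ 2 * ‖gt‖ ^ 2 := by
      rw [norm_neg, norm_smul, Real.norm_eq_abs, abs_of_pos hη]; ring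
    rw [h1, h2] at hdes
    have hδ : ‖gt - a‖ ≤ η * E₀ := herr t ht
    have hδ0 : (0:ℝ) ≤ ‖gt - a‖ := norm_nonneg _
    have hpol : ‖gt - a‖ ^ 2 = ‖gt‖ ^ 2 - 2 * (inner ℝ gt a : ℝ) + ‖a‖ ^ 2 := by
      rw [norm_sub_sq_real]
    have hcomm : (inner ℝ a gt : ℝ) = (inner ℝ gt a : ℝ) := real_inner_comm _ _
    nlinarith [sq_nonneg ‖gt‖, sq_nonneg ‖a‖, mul_le_mul hδ hδ hδ0 (by positivity),
      mul_pos hη hη, sq_nonneg (η * E₀)]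
  -- sum the per-step bounds
  have hsum := Finset.sum_le_sum key
  have htel : ∑ t ∈ Finset.Icc 1 T, (f (θ t) - f (θ (t+1)))
      = f (θ 1) - f (θ (T+1)) := by
    rw [← Finset.Ico_add_one_right_eq_Icc, Finset.sum_Ico_eq_sum_range]
    have := Finset.sum_range_sub' (fun i => f (θ (1 + i))) T
    simpa [add_comm, add_assoc, add_left_comm] using this
  have hsum2 : ∑ t ∈ Finset.Icc 1 T, (f (θ t) - f (θ (t+1)) + η ^ 3 * E₀ ^ 2 / 2)
      = f (θ 1) - f (θ (T+1)) + T * (η ^ 3 * E₀ ^ 2 / 2) := by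
    rw [Finset.sum_add_distrib, htel, Finset.sum_const, Nat.card_Icc]
    simp [mul_comm]
  rw [hsum2] at hsum
  have hsum3 : ∑ t ∈ Finset.Icc 1 T, η / 2 * ‖gradient f (θ t)‖ ^ 2
      = η / 2 * ∑ t ∈ Finset.Icc 1 T, ‖gradient f (θ t)‖ ^ 2 := by
    rw [Finset.mul_sum]
  rw [hsum3] at hsum
  have hm : m ≤ f (θ (T+1)) := hbdd _
  have hTpos : (0:ℝ) < T := by exact_mod_cast hT
  set S := ∑ t ∈ Finset.Icc 1 T, ‖gradient f (θ t)‖ ^ 2 with hS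
  have key2 : η * S ≤ 2 * (f (θ 1) - m) + (T : ℝ) * (η ^ 3 * E₀ ^ 2) := by
    nlinarith [hsum, hm]
  rw [one_div, inv_mul_eq_div, div_le_iff₀ hTpos]
  have hrhs : (2 / (η * T) * (f (θ 1) - m) + η ^ 2 * E₀ ^ 2) * T
      = 2 * (f (θ 1) - m) / η + η ^ 2 * E₀ ^ 2 * T := by
    field_simp
  rw [hrhs, ← mul_le_mul_iff_right₀ hη]
  have : η * (2 * (f (θ 1) - m) / η + η ^ 2 * E₀ ^ 2 * (T : ℝ))
      = 2 * (f (θ 1) - m) + (T : ℝ) * (η ^ 3 * E₀ ^ 2) := by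
    field_simp
  rw [this]
  exact key2
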